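/- The group presented by two generators a, b subject to the two relators (a*b*a)*(b*a*b)⁻¹ and (a*b)^6 is isomorphic to SL(2,ℤ). Equivalently, the mapping class group of the torus, given by the presentation ⟨a, b | a*b*a = b*a*b, (a*b)^6 = 1⟩, is isomorphic to the special linear group of 2×2 integer matrices of determinant 1. -/

import Mathlib

/-- The relators of the presentation `⟨a, b | a*b*a = b*a*b, (a*b)^6 = 1⟩` of the
mapping class group of the torus, inside the free group on two generators. -/
def torusMCGRelators : Set (FreeGroup (Fin 2)) :=
  {(FreeGroup.of 0 * FreeGroup.of 1 * FreeGroup.of 0) *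
      (FreeGroup.of 1 * FreeGroup.of 0 * FreeGroup.of 1)⁻¹,
   (FreeGroup.of 0 * FreeGroup.of 1) ^ 6}

namespace TorusMCGAux

open Matrix UpperHalfPlane Pointwise Cardinal

abbrev SL2Z := Matrix.SpecialLinearGroup (Fin 2) ℤ
abbrev Gt := PresentedGroup torusMCGRelators

/-! ### The target matrices -/

def Am : SL2Z := ⟨!![1,1;0,1], by norm_num [Matrix.det_fin_two_of]⟩
def Bm : SL2Z := ⟨!![1,0;-1,1], by norm_num [Matrix.det_fin_two_of]⟩
def Smat : SL2Z := ⟨!![0,1;-1,0], by norm_num [Matrix.det_fin_two_of]⟩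
def Umat : SL2Z := ⟨!![0,1;-1,1], by norm_num [Matrix.det_fin_two_of]⟩
def U2mat : SL2Z := ⟨!![-1,1;-1,0], by norm_num [Matrix.det_fin_two_of]⟩

lemma Am_coe : (Am : Matrix (Fin 2) (Fin 2) ℤ) = !![1,1;0,1] := rfl
lemma Bm_coe : (Bm : Matrix (Fin 2) (Fin 2) ℤ) = !![1,0;-1,1] := rfl
lemma Smat_coe : (Smat : Matrix (Fin 2) (Fin 2) ℤ) = !![0,1;-1,0] := rfl
lemma Umat_coe : (Umat : Matrix (Fin 2) (Fin 2) ℤ) = !![0,1;-1,1] := rfl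
lemma U2mat_coe : (U2mat : Matrix (Fin 2) (Fin 2) ℤ) = !![-1,1;-1,0] := rfl

lemma ABA_eq : Am * Bm * Am = Smat := by
  ext i j
  fin_cases i <;> fin_cases j <;>
    simp [Am_coe, Bm_coe, Smat_coe, Matrix.SpecialLinearGroup.coe_mul, Matrix.mul_fin_two]

lemma AB_eq : Am * Bm = Umat := by
  ext i j
  fin_cases i <;> fin_cases j <;>
    simp [Am_coe, Bm_coe, Umat_coe, Matrix.SpecialLinearGroup.coe_mul, Matrix.mul_fin_two]

lemma U_sq : Umat * Umat = U2mat := by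
  ext i j
  fin_cases i <;> fin_cases j <;>
    simp [Umat_coe, U2mat_coe, Matrix.SpecialLinearGroup.coe_mul, Matrix.mul_fin_two]

lemma AB_cubed : (Am * Bm)^3 = -1 := by
  ext i j
  fin_cases i <;> fin_cases j <;>
    simp [Am_coe, Bm_coe, pow_succ, Matrix.SpecialLinearGroup.coe_mul, Matrix.mul_fin_two]

lemma negSmat_eq : (-1 : SL2Z) * Smat = ModularGroup.S := by
  ext i j
  fin_cases i <;> fin_cases j <;>
    simp [Smat_coe, ModularGroup.coe_S, Matrix.SpecialLinearGroup.coe_mul, Matrix.mul_fin_two]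

lemma Am_eq_T : Am = ModularGroup.T := by
  ext i j
  fin_cases i <;> fin_cases j <;> simp [Am, ModularGroup.coe_T]

lemma negone_ne_one : (-1 : SL2Z) ≠ 1 := by
  intro h
  have := congrArg (fun g : SL2Z => (g : Matrix (Fin 2) (Fin 2) ℤ) 0 0) h
  simpa using this

/-! ### The homomorphism from the presented group -/

def fgen : Fin 2 → SL2Z := ![Am, Bm]

lemma relhold : ∀ r ∈ torusMCGRelators, FreeGroup.lift fgen r = 1 := by
  intro r hr
  rcases hr with h | h <;> subst h <;> simp [fgen] <;>
  · ext i j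
    fin_cases i <;> fin_cases j <;>
      simp [Am_coe, Bm_coe, pow_succ, Matrix.SpecialLinearGroup.coe_mul, Matrix.mul_fin_two,
        Matrix.SpecialLinearGroup.coe_inv]

noncomputable def φ : Gt →* SL2Z := PresentedGroup.toGroup relhold

noncomputable def ga : Gt := PresentedGroup.of 0
noncomputable def gb : Gt := PresentedGroup.of 1

lemma φ_a : φ ga = Am := PresentedGroup.toGroup.of relhold
lemma φ_b : φ gb = Bm := PresentedGroup.toGroup.of relhold

lemma rel_one : ∀ r ∈ torusMCGRelators, PresentedGroup.mk torusMCGRelators r = 1 := by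
  intro r hr
  exact (QuotientGroup.eq_one_iff r).2 (Subgroup.subset_normalClosure hr)

lemma braid : ga * gb * ga = gb * ga * gb := by
  have h := rel_one _ (Set.mem_insert _ _)
  simp only [_root_.map_mul, _root_.map_inv] at h
  have h2 : (ga * gb * ga) * (gb * ga * gb)⁻¹ = 1 := h
  group at h2 ⊢
  exact mul_inv_eq_one.mp (by group at h2 ⊢; exact h2)

lemma pow6 : (ga * gb)^6 = 1 := by
  have := rel_one _ (Set.mem_insert_iff.mpr (Or.inr rfl))
  simpa [_root_.map_mul, _root_.map_pow, ga, gb, PresentedGroup.of] using this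

/-! ### Derived relations -/

noncomputable def zz : Gt := (ga * gb)^3
noncomputable def sg : Gt := ga * gb * ga
noncomputable def ug : Gt := ga * gb

lemma b_delta : gb * sg = sg * ga := by
  unfold sg; rw [← mul_assoc, ← mul_assoc, braid]

lemma a_delta : ga * sg = sg * gb := by
  unfold sg; rw [show ga * (ga*gb*ga) = ga * (gb*ga*gb) from by rw [braid]]
  group

lemma z_eq_ss : zz = sg * sg := by
  have h1 : zz = (ga*gb*ga)*(gb*ga*gb) := by
    unfold zz; rw [pow_succ, pow_succ, pow_one]; group
  rw [h1, ← braid]; rfl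

lemma z_comm_a : zz * ga = ga * zz := by
  rw [z_eq_ss, mul_assoc, ← b_delta, ← mul_assoc, ← a_delta, mul_assoc]

lemma z_comm_b : zz * gb = gb * zz := by
  rw [z_eq_ss, mul_assoc, ← a_delta, ← mul_assoc, ← b_delta, mul_assoc]

lemma z_sq : zz * zz = 1 := by
  have h : (ga*gb)^6 = zz * zz := by unfold zz; rw [← pow_add]
  rw [← h, pow6]

lemma s_sq : sg * sg = zz := z_eq_ss.symm

lemma u_cubed : ug^3 = zz := rfl

lemma a_eq : ga = ug⁻¹ * sg := by unfold ug sg; group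

lemma b_eq : gb = sg⁻¹ * (ug * ug) := by unfold ug sg; group

lemma z_central : ∀ g : Gt, g * zz = zz * g := by
  intro g
  have h : g ∈ Subgroup.centralizer {zz} := by
    apply PresentedGroup.generated_by
    intro j
    fin_cases j <;> rw [Subgroup.mem_centralizer_singleton_iff]
    · exact z_comm_a.symm
    · exact z_comm_b.symm
  exact Subgroup.mem_centralizer_singleton_iff.mp h

lemma φ_s : φ sg = Smat := by rw [sg, _root_.map_mul, _root_.map_mul, φ_a, φ_b, ABA_eq]

lemma φ_u : φ ug = Umat := by rw [ug, _root_.map_mul, φ_a, φ_b, AB_eq]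

lemma φ_z : φ zz = -1 := by
  rw [zz, _root_.map_pow, _root_.map_mul, φ_a, φ_b, AB_cubed]

/-! ### Surjectivity -/

lemma natAbs_emod_lt' (a b : ℤ) (h : b ≠ 0) : (a % b).natAbs < b.natAbs := by
  have h0 : 0 ≤ a % b := Int.emod_nonneg a h
  rcases lt_or_gt_of_ne h with hb | hb
  · have h1 : a % b = a % (-b) := by rw [Int.emod_neg]
    have h2 : a % (-b) < -b := Int.emod_lt_of_pos a (by omega)
    omega
  · have h2 : a % b < b := Int.emod_lt_of_pos a hb
    omega

lemma S_sq' : ModularGroup.S * ModularGroup.S = (-1 : SL2Z) := by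
  ext i j
  fin_cases i <;> fin_cases j <;>
    simp [ModularGroup.coe_S, Matrix.SpecialLinearGroup.coe_mul]

theorem generates (H : Subgroup SL2Z) (hT : ModularGroup.T ∈ H) (hS : ModularGroup.S ∈ H) :
    ∀ M : SL2Z, M ∈ H := by
  have hneg : (-1 : SL2Z) ∈ H := by rw [← S_sq']; exact H.mul_mem hS hS
  suffices h : ∀ n, ∀ M : SL2Z, ((M : Matrix (Fin 2) (Fin 2) ℤ) 1 0).natAbs = n → M ∈ H by
    exact fun M => h _ M rfl
  intro n
  induction n using Nat.strong_induction_on with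
  | _ n ih =>
  intro M hn
  by_cases hc : (M : Matrix (Fin 2) (Fin 2) ℤ) 1 0 = 0
  · have hdet := M.2
    rw [Matrix.det_fin_two] at hdet
    rw [hc, mul_zero, sub_zero] at hdet
    rcases Int.mul_eq_one_iff_eq_one_or_neg_one.mp hdet with ⟨h1,h2⟩|⟨h1,h2⟩
    · have hM : M = ModularGroup.T ^ ((M : Matrix (Fin 2) (Fin 2) ℤ) 0 1) := by
        ext i j
        fin_cases i <;> fin_cases j <;>
          simp [ModularGroup.coe_T_zpow, h1, h2, hc]
      rw [hM]; exact H.zpow_mem hT _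
    · have hM : M = -1 * ModularGroup.T ^ (-((M : Matrix (Fin 2) (Fin 2) ℤ) 0 1)) := by
        ext i j
        fin_cases i <;> fin_cases j <;>
          simp [ModularGroup.coe_T_zpow, Matrix.SpecialLinearGroup.coe_mul, h1, h2, hc]
      rw [hM]; exact H.mul_mem hneg (H.zpow_mem hT _)
  · set c := (M : Matrix (Fin 2) (Fin 2) ℤ) 1 0 with hcdef
    set k := (M : Matrix (Fin 2) (Fin 2) ℤ) 0 0 / c with hkdef
    set M' := ModularGroup.S * ModularGroup.T^(-k) * M with hM'def
    have hM'10 : (M' : Matrix (Fin 2) (Fin 2) ℤ) 1 0 = (M : Matrix (Fin 2) (Fin 2) ℤ) 0 0 % c := by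
      have hTk : ((ModularGroup.T^(-k) : SL2Z) : Matrix (Fin 2) (Fin 2) ℤ) = !![1, -k; 0, 1] :=
        ModularGroup.coe_T_zpow (-k)
      have h3 : (M' : Matrix (Fin 2) (Fin 2) ℤ) = ModularGroup.S.1 * (!![1, -k; 0, 1] * M.1) := by
        rw [hM'def, mul_assoc]
        simp only [Matrix.SpecialLinearGroup.coe_mul, hTk]
      have h2 : (M' : Matrix (Fin 2) (Fin 2) ℤ) 1 0
          = (ModularGroup.S.1 * (!![1, -k; 0, 1] * M.1)) 1 0 := by
        rw [← h3]
      rw [h2]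
      simp [Matrix.mul_apply, Fin.sum_univ_two, ModularGroup.coe_S, Matrix.vecMul,
        dotProduct, Matrix.vecHead, Matrix.vecTail]
      rw [Int.emod_def]
      ring
    have hlt : ((M' : Matrix (Fin 2) (Fin 2) ℤ) 1 0).natAbs < n := by
      rw [hM'10, ← hn]
      exact natAbs_emod_lt' _ _ hc
    have hM' : M' ∈ H := ih _ hlt M' rfl
    have hMeq : M = ModularGroup.T^k * ModularGroup.S⁻¹ * M' := by rw [hM'def]; group
    rw [hMeq]
    exact H.mul_mem (H.mul_mem (H.zpow_mem hT k) (H.inv_mem hS)) hM'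

lemma φ_surj : Function.Surjective φ := by
  intro M
  have hT : ModularGroup.T ∈ φ.range := ⟨ga, by rw [φ_a, Am_eq_T]⟩
  have hS : ModularGroup.S ∈ φ.range := by
    refine ⟨zz * sg, ?_⟩
    rw [_root_.map_mul, φ_z, φ_s, negSmat_eq]
  exact generates φ.range hT hS M

/-! ### The action on the upper half plane -/

lemma smul_coe' (g : SL2Z) (τ : ℍ) :
    ((g • τ : ℍ) : ℂ) =
      (((g : Matrix (Fin 2) (Fin 2) ℤ) 0 0 : ℝ) * τ + ((g : Matrix (Fin 2) (Fin 2) ℤ) 0 1 : ℝ)) /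
        (((g : Matrix (Fin 2) (Fin 2) ℤ) 1 0 : ℝ) * τ + ((g : Matrix (Fin 2) (Fin 2) ℤ) 1 1 : ℝ)) := by
  rw [UpperHalfPlane.specialLinearGroup_apply]
  simp [UpperHalfPlane.coe_mk, algebraMap_int_eq]

lemma S_maps (τ : ℍ) (h : 0 < τ.re) : (Smat • τ).re < 0 := by
  have hco : ((Smat • τ : ℍ) : ℂ) = 1 / (-(τ:ℂ)) := by
    rw [smul_coe']; norm_num [Smat]
  have hne : (τ:ℂ) ≠ 0 := UpperHalfPlane.ne_zero τ
  have h2 : (Smat • τ).re = (1 / (-(τ:ℂ))).re := by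
    rw [← UpperHalfPlane.coe_re, hco]
  have hn : 0 < Complex.normSq (-(τ:ℂ)) := by
    rw [Complex.normSq_pos]; simpa using hne
  rw [h2, Complex.div_re]
  simp only [Complex.one_re, Complex.one_im, Complex.neg_re, Complex.neg_im, one_mul,
    zero_mul, zero_div, add_zero, neg_div]
  exact neg_lt_zero.mpr (div_pos h hn)

lemma U_maps (τ : ℍ) (h : τ.re < 0) : 0 < (Umat • τ).re := by
  have hco : ((Umat • τ : ℍ) : ℂ) = 1 / (1 - (τ:ℂ)) := by
    rw [smul_coe']; norm_num [Umat]; ring_nf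
  have hne : (1 - (τ:ℂ)) ≠ 0 := by
    intro hh
    have h0 : (1 - (τ:ℂ)).im = 0 := by rw [hh]; rfl
    simp only [Complex.sub_im, Complex.one_im, zero_sub, neg_eq_zero] at h0
    exact (ne_of_gt τ.2) h0
  have h2 : (Umat • τ).re = (1 / (1-(τ:ℂ))).re := by
    rw [← UpperHalfPlane.coe_re, hco]
  have hn : 0 < Complex.normSq (1-(τ:ℂ)) := by rw [Complex.normSq_pos]; exact hne
  rw [h2, Complex.div_re]
  simp only [Complex.one_re, Complex.one_im, Complex.sub_re, Complex.sub_im, one_mul,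
    zero_mul, zero_div, add_zero]
  apply div_pos _ hn
  have h3 : τ.re = (τ:ℂ).re := rfl
  linarith [h3 ▸ h]

lemma U2_maps (τ : ℍ) (h : τ.re < 0) : 0 < (U2mat • τ).re := by
  have hco : ((U2mat • τ : ℍ) : ℂ) = (1 - (τ:ℂ)) / (-(τ:ℂ)) := by
    rw [smul_coe']; norm_num [U2mat]; ring_nf
  have hne : (τ:ℂ) ≠ 0 := UpperHalfPlane.ne_zero τ
  have h2 : (U2mat • τ).re = ((1 - (τ:ℂ)) / (-(τ:ℂ))).re := by
    rw [← UpperHalfPlane.coe_re, hco]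
  have hn : 0 < Complex.normSq (-(τ:ℂ)) := by
    rw [Complex.normSq_pos]; simpa using hne
  rw [h2, Complex.div_re]
  have hx : (τ:ℂ).re < 0 := h
  have hy : 0 < (τ:ℂ).im := τ.2
  have hnn : Complex.normSq (-(τ:ℂ)) = (τ:ℂ).re^2 + (τ:ℂ).im^2 := by
    simp [Complex.normSq_apply]; ring
  simp only [Complex.sub_re, Complex.sub_im, Complex.one_re, Complex.one_im, Complex.neg_re,
    Complex.neg_im]
  rw [hnn]
  have hpos : (0:ℝ) < (τ:ℂ).re^2 + (τ:ℂ).im^2 := by positivity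
  rw [← add_div]
  apply div_pos _ hpos
  nlinarith

lemma negone_smul (τ : ℍ) : ((-1 : SL2Z)) • τ = τ := by
  apply UpperHalfPlane.ext
  rw [smul_coe']
  have h00 : ((-1 : SL2Z) : Matrix (Fin 2) (Fin 2) ℤ) 0 0 = -1 := by simp
  have h01 : ((-1 : SL2Z) : Matrix (Fin 2) (Fin 2) ℤ) 0 1 = 0 := by simp
  have h10 : ((-1 : SL2Z) : Matrix (Fin 2) (Fin 2) ℤ) 1 0 = 0 := by simp
  have h11 : ((-1 : SL2Z) : Matrix (Fin 2) (Fin 2) ℤ) 1 1 = -1 := by simp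
  rw [h00, h01, h10, h11]
  push_cast
  rw [zero_mul, zero_add, add_zero, neg_mul, one_mul, neg_div_neg_eq, div_one]

/-! ### Cyclic homomorphisms -/

def cycHom {Γ : Type*} [Group Γ] (n : ℕ) (x : Γ) (hx : x ^ (n:ℤ) = 1) :
    Multiplicative (ZMod n) →* Γ :=
  AddMonoidHom.toMultiplicativeLeft
    (ZMod.lift n ⟨(zmultiplesHom (Additive Γ)) (Additive.ofMul x), by
      simpa [zmultiplesHom] using congrArg Additive.ofMul hx⟩)

lemma cycHom_apply {Γ : Type*} [Group Γ] (n : ℕ) (x : Γ) (hx : x ^ (n:ℤ) = 1) (m : ℤ) :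
    cycHom n x hx (Multiplicative.ofAdd ((m : ZMod n))) = x ^ m := by
  simp [cycHom, AddMonoidHom.coe_toMultiplicativeLeft, ZMod.lift_coe, zmultiplesHom]

/-! ### The quotient by the center and the ping-pong argument -/

noncomputable def NN : Subgroup Gt := Subgroup.zpowers zz

instance NN_normal : NN.Normal := by
  constructor
  intro x hx g
  rcases Subgroup.mem_zpowers_iff.mp hx with ⟨k, hk⟩
  have hcomm : g * x = x * g := by
    rw [← hk]
    exact ((show Commute g zz from z_central g).zpow_right k).eq
  rw [hcomm, mul_assoc, mul_inv_cancel, mul_one]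
  exact hx

abbrev Qt := Gt ⧸ NN

noncomputable def qh : Gt →* Qt := QuotientGroup.mk' NN

lemma q_s_sq : (qh sg) ^ (2:ℤ) = 1 := by
  have : qh sg * qh sg = qh zz := by rw [← _root_.map_mul, s_sq]
  have hz : qh zz = 1 := by
    rw [qh, QuotientGroup.mk'_apply, QuotientGroup.eq_one_iff]
    exact Subgroup.mem_zpowers zz
  rw [show (2:ℤ) = 1 + 1 from rfl, _root_.zpow_add, zpow_one, this, hz]

lemma q_u_cubed : (qh ug) ^ (3:ℤ) = 1 := by
  have h3 : qh ug ^ (3:ℕ) = qh (ug ^ 3) := by rw [_root_.map_pow]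
  have hz : qh zz = 1 := by
    rw [qh, QuotientGroup.mk'_apply, QuotientGroup.eq_one_iff]
    exact Subgroup.mem_zpowers zz
  rw [show (3:ℤ) = ((3:ℕ):ℤ) from rfl, zpow_natCast, h3, u_cubed, hz]

def Hfam : Bool → Type := fun b => match b with
  | false => Multiplicative (ZMod 2)
  | true => Multiplicative (ZMod 3)

instance Hfam_group : (b : Bool) → Group (Hfam b) := fun b => by
  cases b <;> dsimp [Hfam] <;> infer_instance

noncomputable def gq : (b : Bool) → Hfam b →* Qt
  | false => cycHom 2 (qh sg) q_s_sq
  | true => cycHom 3 (qh ug) q_u_cubed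

noncomputable def ρ : Gt →* Equiv.Perm ℍ :=
  (MulAction.toPermHom SL2Z ℍ).comp φ

lemma ρ_z : ρ zz = 1 := by
  rw [ρ, MonoidHom.comp_apply, φ_z]
  ext τ
  simp [MulAction.toPermHom_apply, negone_smul]

lemma NN_le_ker : NN ≤ ρ.ker := by
  intro x hx
  rcases Subgroup.mem_zpowers_iff.mp hx with ⟨k, hk⟩
  rw [MonoidHom.mem_ker, ← hk, map_zpow, ρ_z, _root_.one_zpow]

noncomputable def ρbar : Qt →* Equiv.Perm ℍ :=
  QuotientGroup.lift NN ρ NN_le_ker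

lemma ρbar_q (x : Gt) : ρbar (qh x) = ρ x := rfl

noncomputable def ff : (b : Bool) → Hfam b →* Equiv.Perm ℍ := fun b => ρbar.comp (gq b)

noncomputable def pp : Monoid.CoprodI Hfam →* Qt := Monoid.CoprodI.lift gq

lemma lift_ff_eq : Monoid.CoprodI.lift ff = ρbar.comp pp := by
  apply Monoid.CoprodI.ext_hom
  intro i
  ext x
  simp [pp, ff, Monoid.CoprodI.lift_of]

/-- The ping-pong sets. -/
def Xset : Bool → Set ℍ := fun b => match b with
  | false => {τ : ℍ | τ.re < 0}
  | true => {τ : ℍ | 0 < τ.re}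

lemma zmod2_cases : ∀ x : ZMod 2, x = 0 ∨ x = 1 := by decide
lemma zmod3_cases : ∀ x : ZMod 3, x = 0 ∨ x = 1 ∨ x = 2 := by decide

lemma gq_false_one : gq false (Multiplicative.ofAdd (1 : ZMod 2)) = qh sg := by
  show cycHom 2 (qh sg) q_s_sq (Multiplicative.ofAdd (1 : ZMod 2)) = qh sg
  have h2 := cycHom_apply 2 (qh sg) q_s_sq 1
  rw [show ((1:ℤ) : ZMod 2) = (1 : ZMod 2) from by norm_cast, zpow_one] at h2
  exact h2

lemma gq_true_one : gq true (Multiplicative.ofAdd (1 : ZMod 3)) = qh ug := by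
  show cycHom 3 (qh ug) q_u_cubed (Multiplicative.ofAdd (1 : ZMod 3)) = qh ug
  have h2 := cycHom_apply 3 (qh ug) q_u_cubed 1
  rw [show ((1:ℤ) : ZMod 3) = (1 : ZMod 3) from by norm_cast, zpow_one] at h2
  exact h2

lemma gq_true_two : gq true (Multiplicative.ofAdd (2 : ZMod 3)) = qh ug * qh ug := by
  show cycHom 3 (qh ug) q_u_cubed (Multiplicative.ofAdd (2 : ZMod 3)) = qh ug * qh ug
  have h2 := cycHom_apply 3 (qh ug) q_u_cubed 2
  rw [show ((2:ℤ) : ZMod 3) = (2 : ZMod 3) from by norm_cast] at h2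
  rw [h2, show (2:ℤ) = 1 + 1 from rfl, _root_.zpow_add, zpow_one]

lemma ff_false_one_apply (τ : ℍ) :
    ff false (Multiplicative.ofAdd (1 : ZMod 2)) τ = Smat • τ := by
  show ρbar (gq false (Multiplicative.ofAdd (1 : ZMod 2))) τ = Smat • τ
  rw [gq_false_one, ρbar_q, ρ, MonoidHom.comp_apply, φ_s]
  rfl

lemma ff_true_one_apply (τ : ℍ) :
    ff true (Multiplicative.ofAdd (1 : ZMod 3)) τ = Umat • τ := by
  show ρbar (gq true (Multiplicative.ofAdd (1 : ZMod 3))) τ = Umat • τ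
  rw [gq_true_one, ρbar_q, ρ, MonoidHom.comp_apply, φ_u]
  rfl

lemma ff_true_two_apply (τ : ℍ) :
    ff true (Multiplicative.ofAdd (2 : ZMod 3)) τ = U2mat • τ := by
  show ρbar (gq true (Multiplicative.ofAdd (2 : ZMod 3))) τ = U2mat • τ
  rw [gq_true_two, _root_.map_mul]
  have h1 : ρbar (qh ug) = ρ ug := rfl
  rw [h1, ρ, MonoidHom.comp_apply, φ_u]
  show (MulAction.toPermHom SL2Z ℍ Umat) ((MulAction.toPermHom SL2Z ℍ Umat) τ) = U2mat • τ
  simp only [MulAction.toPermHom_apply, MulAction.toPerm_apply]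
  rw [← mul_smul, U_sq]

lemma Xset_false_mem (τ : ℍ) : τ ∈ Xset false ↔ τ.re < 0 := Iff.rfl
lemma Xset_true_mem (τ : ℍ) : τ ∈ Xset true ↔ 0 < τ.re := Iff.rfl

lemma lift_ff_injective : Function.Injective (Monoid.CoprodI.lift ff) := by
  apply Monoid.CoprodI.lift_injective_of_ping_pong ff _ Xset
  · -- nonempty
    intro b
    cases b
    · refine ⟨⟨⟨-1,1⟩, by norm_num⟩, ?_⟩
      rw [Xset_false_mem]
      show (-1:ℝ) < 0
      norm_num
    · refine ⟨⟨⟨1,1⟩, by norm_num⟩, ?_⟩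
      rw [Xset_true_mem]
      show (0:ℝ) < 1
      norm_num
  · -- disjoint
    intro i j hij
    cases i <;> cases j
    · exact absurd rfl hij
    · show Disjoint (Xset false) (Xset true)
      rw [Set.disjoint_left]
      intro τ h1 h2
      rw [Xset_false_mem] at h1
      rw [Xset_true_mem] at h2
      linarith
    · show Disjoint (Xset true) (Xset false)
      rw [Set.disjoint_left]
      intro τ h1 h2
      rw [Xset_true_mem] at h1
      rw [Xset_false_mem] at h2
      linarith
    · exact absurd rfl hij
  · -- ping pong condition
    intro i j hij
    cases i <;> cases j
    · exact absurd rfl hij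
    · -- i = false, j = true : sg maps X true into X false
      intro h hne
      have hh : h = Multiplicative.ofAdd (1 : ZMod 2) := by
        rcases zmod2_cases h.toAdd with h0 | h0
        · exact absurd (by rw [← ofAdd_toAdd h, h0]; rfl) hne
        · rw [← ofAdd_toAdd h, h0]; rfl
      subst hh
      intro τ hτ
      rcases hτ with ⟨σ, hσ, rfl⟩
      rw [Xset_true_mem] at hσ
      rw [Xset_false_mem]
      simp only [Equiv.Perm.smul_def]
      exact ff_false_one_apply σ ▸ S_maps σ hσ
    · -- i = true, j = false
      intro h hne
      rcases zmod3_cases h.toAdd with h0 | h0 | h0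
      · exact absurd (by rw [← ofAdd_toAdd h, h0]; rfl) hne
      · have hh : h = Multiplicative.ofAdd (1 : ZMod 3) := by rw [← ofAdd_toAdd h, h0]; rfl
        subst hh
        intro τ hτ
        rcases hτ with ⟨σ, hσ, rfl⟩
        rw [Xset_false_mem] at hσ
        rw [Xset_true_mem]
        simp only [Equiv.Perm.smul_def]
        exact ff_true_one_apply σ ▸ U_maps σ hσ
      · have hh : h = Multiplicative.ofAdd (2 : ZMod 3) := by rw [← ofAdd_toAdd h, h0]; rfl
        subst hh
        intro τ hτ
        rcases hτ with ⟨σ, hσ, rfl⟩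
        rw [Xset_false_mem] at hσ
        rw [Xset_true_mem]
        simp only [Equiv.Perm.smul_def]
        exact ff_true_two_apply σ ▸ U2_maps σ hσ
    · exact absurd rfl hij
  · -- cardinality
    right
    refine ⟨true, ?_⟩
    have h3 : #(Hfam true) = 3 := by
      rw [show Hfam true = Multiplicative (ZMod 3) from rfl]
      simp [Cardinal.mk_fintype]
    rw [h3]

lemma pp_surjective : Function.Surjective pp := by
  intro y
  rcases QuotientGroup.mk'_surjective NN y with ⟨x, rfl⟩
  suffices h : QuotientGroup.mk' NN x ∈ pp.range by exact h
  have hmem : x ∈ pp.range.comap (QuotientGroup.mk' NN) := by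
    apply PresentedGroup.generated_by
    intro j
    have hqs : qh sg ∈ pp.range := ⟨Monoid.CoprodI.of (M := Hfam)
        (i := false) (Multiplicative.ofAdd (1 : ZMod 2)), by
      exact (Monoid.CoprodI.lift_of gq _).trans gq_false_one⟩
    have hqu : qh ug ∈ pp.range := ⟨Monoid.CoprodI.of (M := Hfam)
        (i := true) (Multiplicative.ofAdd (1 : ZMod 3)), by
      exact (Monoid.CoprodI.lift_of gq _).trans gq_true_one⟩
    fin_cases j
    · show qh ga ∈ pp.range
      rw [show ga = ug⁻¹ * sg from a_eq, _root_.map_mul, _root_.map_inv]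
      exact Subgroup.mul_mem _ (Subgroup.inv_mem _ hqu) hqs
    · show qh gb ∈ pp.range
      rw [show gb = sg⁻¹ * (ug * ug) from b_eq, _root_.map_mul, _root_.map_inv, _root_.map_mul]
      exact Subgroup.mul_mem _ (Subgroup.inv_mem _ hqs) (Subgroup.mul_mem _ hqu hqu)
  exact hmem

lemma ρbar_injective : Function.Injective ρbar := by
  rw [injective_iff_map_eq_one]
  intro y hy
  rcases pp_surjective y with ⟨w, rfl⟩
  have : Monoid.CoprodI.lift ff w = 1 := by rw [lift_ff_eq]; exact hy
  have hw : w = 1 := by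
    apply lift_ff_injective
    rw [this, _root_.map_one]
  rw [hw, _root_.map_one]

lemma φ_inj : Function.Injective φ := by
  rw [injective_iff_map_eq_one]
  intro x hx
  have hρ : ρ x = 1 := by
    rw [ρ, MonoidHom.comp_apply, hx, _root_.map_one]
  have hq : qh x = 1 := by
    apply ρbar_injective
    rw [ρbar_q, hρ, _root_.map_one]
  have hxN : x ∈ NN := (QuotientGroup.eq_one_iff x).mp hq
  rcases Subgroup.mem_zpowers_iff.mp hxN with ⟨k, hk⟩
  rcases Int.even_or_odd k with ⟨m, hm⟩ | ⟨m, hm⟩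
  · subst hm
    have hz2 : zz ^ (2:ℤ) = 1 := by
      rw [show (2:ℤ) = 1 + 1 from rfl, _root_.zpow_add, zpow_one, z_sq]
    rw [← hk, show m + m = 2 * m from by ring, _root_.zpow_mul, hz2, _root_.one_zpow]
  · exfalso
    have hz2 : zz ^ (2:ℤ) = 1 := by
      rw [show (2:ℤ) = 1 + 1 from rfl, _root_.zpow_add, zpow_one, z_sq]
    have hxz : x = zz := by
      rw [← hk, hm, _root_.zpow_add, zpow_one, show 2 * m = m + m from by ring, _root_.zpow_add,
        ← _root_.zpow_add, show m + m = 2 * m from by ring, _root_.zpow_mul, hz2, _root_.one_zpow, one_mul]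
    rw [hxz, φ_z] at hx
    exact negone_ne_one hx

end TorusMCGAux

/-- The group presented by two generators `a, b` subject to the relators
`(a*b*a)*(b*a*b)⁻¹` and `(a*b)^6` -- the mapping class group of the torus -- is
isomorphic to `SL(2, ℤ)`. -/
theorem torusMCG_iso_SL2Z :
    Nonempty (PresentedGroup torusMCGRelators ≃* Matrix.SpecialLinearGroup (Fin 2) ℤ) := by
  exact ⟨MulEquiv.ofBijective TorusMCGAux.φ ⟨TorusMCGAux.φ_inj, TorusMCGAux.φ_surj⟩⟩
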